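/- If G is a 3-connected 2-cyclic simple graph on n ≥ 6 vertices, then the number of edges of G satisfies e(G) ≥ 2n. -/
import Mathlib

/-- `G` is `k`-connected: more than `k` vertices, and removing fewer than `k`
vertices leaves a connected graph. -/
def SimpleGraph.KConnected {V : Type*} [Fintype V] (k : ℕ) (G : SimpleGraph V) : Prop :=
  k < Fintype.card V ∧ ∀ X : Set V, X.ncard < k → (G.induce (Xᶜ : Set V)).Connected
/-- The neighborhood of a vertex set `S`: vertices outside `S` with a neighbor in `S`. -/
def SimpleGraph.setNbhd {V : Type*} (G : SimpleGraph V) (S : Set V) : Set V :=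
  {v | v ∉ S ∧ ∃ u ∈ S, G.Adj u v}

/-- `G` is `k`-cyclic: every nonempty vertex set of size at most `k` is dominating
or has a cycle in its neighborhood. -/
def SimpleGraph.KCyclic {V : Type*} (k : ℕ) (G : SimpleGraph V) : Prop :=
  ∀ S : Set V, S.Nonempty → S.ncard ≤ k →
    S ∪ G.setNbhd S = Set.univ ∨ ¬ (G.induce (G.setNbhd S)).IsAcyclic

section Aux
set_option linter.unusedSectionVars false

variable {V : Type*} [Fintype V] [DecidableEq V] (G : SimpleGraph V) [DecidableRel G.Adj]

open Finset SimpleGraph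

/-- walk crossing a set boundary -/
lemma crossing {W : Type*} (H : SimpleGraph W) (Q : W → Prop) :
    ∀ {u v : W} (_ : H.Walk u v), Q u → ¬ Q v → ∃ x y, H.Adj x y ∧ Q x ∧ ¬ Q y := by
  intro u v w
  induction w with
  | nil => intro h1 h2; exact absurd h1 h2
  | @cons x y z h p ih =>
      intro hu hv
      by_cases hq : Q y
      · exact ih hq hv
      · exact ⟨x, y, h, hu, hq⟩

/-- cut lemma: a set whose neighbors all lie in `A ∪ X` with `|X| < 3` and
vertices on both sides gives a contradiction with 3-connectivity. -/
lemma cut (h3 : G.KConnected 3) (X A : Set V) (hX : X.ncard < 3)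
    (a0 : V) (ha0 : a0 ∈ A) (ha0X : a0 ∉ X)
    (z : V) (hz : z ∉ A) (hzX : z ∉ X)
    (hedge : ∀ a ∈ A, ∀ b : V, G.Adj a b → b ∈ A ∪ X) : False := by
  have hc := (h3.2 X hX)
  have hreach := hc.preconnected ⟨a0, ha0X⟩ ⟨z, hzX⟩
  obtain ⟨w⟩ := hreach
  obtain ⟨x, y, hadj, hx, hy⟩ :=
    crossing (G.induce (Xᶜ : Set V)) (fun t => (t : V) ∈ A) w ha0 hz
  have hGadj : G.Adj (x : V) (y : V) := hadj
  have := hedge _ hx _ hGadj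
  rcases this with h | h
  · exact hy h
  · exact y.2 h

/-- a non-acyclic graph on at most 3 vertices contains a triangle -/
lemma triangle_of_not_acyclic {W : Type*} [Fintype W] (H : SimpleGraph W)
    (hW : Fintype.card W ≤ 3) (h : ¬ H.IsAcyclic) :
    ∃ x y z : W, x ≠ y ∧ x ≠ z ∧ y ≠ z ∧ H.Adj x y ∧ H.Adj x z ∧ H.Adj y z := by
  classical
  unfold SimpleGraph.IsAcyclic at h
  push_neg at h
  obtain ⟨v, c, hc⟩ := h
  have h3len := hc.three_le_length
  have hnodup : c.support.tail.Nodup := hc.support_nodup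
  have hlen : c.length = 3 := by
    have h1 : c.support.tail.length ≤ Fintype.card W := hnodup.length_le_card
    have h2 : c.support.length = c.length + 1 := c.length_support
    have h3 : c.support.tail.length = c.support.length - 1 := by
      simp [List.length_tail]
    omega
  clear h3len hc
  cases c with
  | nil => simp at hlen
  | cons h1 p =>
    cases p with
    | nil => simp at hlen
    | cons h2 q =>
      cases q with
      | nil => simp at hlen
      | cons h3' r =>
        cases r with
        | cons h4 s => simp [SimpleGraph.Walk.length_cons] at hlen
        | nil =>
          simp [SimpleGraph.Walk.support_cons] at hnodup
          refine ⟨v, _, _, ?_, ?_, ?_, h1, h3'.symm, h2⟩ <;> tauto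

lemma exists_outside (hn : 6 ≤ Fintype.card V) (S : Set V) (h : S.ncard ≤ 5) :
    ∃ z, z ∉ S := by
  by_contra hzz
  push_neg at hzz
  have he : S = Set.univ := Set.eq_univ_iff_forall.mpr hzz
  rw [he, Set.ncard_univ, Nat.card_eq_fintype_card] at h
  omega

lemma mindeg3 (h3 : G.KConnected 3) (hn : 6 ≤ Fintype.card V) (v : V) :
    3 ≤ G.degree v := by
  by_contra hdeg
  push_neg at hdeg
  set X : Set V := G.neighborSet v with hXdef
  have hXc : X.ncard = G.degree v := by
    rw [← Nat.card_coe_set_eq, Nat.card_eq_fintype_card, G.card_neighborSet_eq_degree]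
  have hXcard : X.ncard < 3 := by omega
  have hsmall : (({v} : Set V) ∪ X).ncard ≤ 3 := by
    have h1 := Set.ncard_union_le ({v} : Set V) X
    have h2 : ({v} : Set V).ncard = 1 := Set.ncard_singleton v
    omega
  have huniv : (Set.univ : Set V).ncard = Fintype.card V := by
    rw [Set.ncard_univ, Nat.card_eq_fintype_card]
  have hz : ∃ z, z ∉ ({v} : Set V) ∪ X := by
    by_contra hzz
    push_neg at hzz
    have he : ({v} : Set V) ∪ X = Set.univ := Set.eq_univ_iff_forall.mpr hzz
    rw [he, huniv] at hsmall
    omega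
  obtain ⟨z, hz⟩ := hz
  refine cut G h3 X {v} hXcard v (Set.mem_singleton v) (by simp [hXdef]) z
    (fun h => hz (Or.inl h)) (fun h => hz (Or.inr h)) ?_
  intro a ha b hadj
  rw [Set.mem_singleton_iff] at ha
  subst ha
  exact Or.inr hadj

/-- the neighborhood of a degree 3 vertex is a triangle -/
lemma deg3_triangle (h3 : G.KConnected 3) (h2 : G.KCyclic 2) (hn : 6 ≤ Fintype.card V)
    {v : V} (hv : G.degree v = 3) :
    ∃ a b c : V, a ≠ b ∧ a ≠ c ∧ b ≠ c ∧ G.neighborFinset v = {a, b, c} ∧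
      G.Adj a b ∧ G.Adj a c ∧ G.Adj b c := by
  have hNS : G.setNbhd {v} = G.neighborSet v := by
    ext u
    simp only [SimpleGraph.setNbhd, Set.mem_singleton_iff, Set.mem_setOf_eq,
      SimpleGraph.mem_neighborSet]
    constructor
    · rintro ⟨h1, w, rfl, hadj⟩; exact hadj
    · intro h; exact ⟨fun he => (G.ne_of_adj h) he.symm, v, rfl, h⟩
  have hNcard : (G.neighborSet v).ncard = 3 := by
    rw [← Nat.card_coe_set_eq, Nat.card_eq_fintype_card, G.card_neighborSet_eq_degree, hv]
  have huniv : (Set.univ : Set V).ncard = Fintype.card V := by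
    rw [Set.ncard_univ, Nat.card_eq_fintype_card]
  rcases h2 {v} ⟨v, rfl⟩ (by simp [Set.ncard_singleton]) with hdom | hcyc
  · exfalso
    rw [hNS] at hdom
    have h1 := Set.ncard_union_le ({v} : Set V) (G.neighborSet v)
    rw [hdom, huniv, Set.ncard_singleton, hNcard] at h1
    omega
  · rw [hNS] at hcyc
    have hcard3 : Fintype.card ↥(G.neighborSet v) ≤ 3 := by
      rw [G.card_neighborSet_eq_degree, hv]
    obtain ⟨x, y, z, hxy, hxz, hyz, e1, e2, e3⟩ :=
      triangle_of_not_acyclic _ hcard3 hcyc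
    have exy : G.Adj (x : V) (y : V) := e1
    have exz : G.Adj (x : V) (z : V) := e2
    have eyz : G.Adj (y : V) (z : V) := e3
    have hxy' : (x : V) ≠ (y : V) := fun h => hxy (Subtype.ext h)
    have hxz' : (x : V) ≠ (z : V) := fun h => hxz (Subtype.ext h)
    have hyz' : (y : V) ≠ (z : V) := fun h => hyz (Subtype.ext h)
    have hsub : ({(x : V), (y : V), (z : V)} : Finset V) ⊆ G.neighborFinset v := by
      intro u hu
      simp only [Finset.mem_insert, Finset.mem_singleton] at hu
      rcases hu with rfl | rfl | rfl <;>
        · rw [SimpleGraph.mem_neighborFinset]; exact Subtype.mem _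
    have hc3 : ({(x : V), (y : V), (z : V)} : Finset V).card = 3 := by
      rw [Finset.card_eq_three]; exact ⟨_, _, _, hxy', hxz', hyz', rfl⟩
    have hNeq : G.neighborFinset v = {(x : V), (y : V), (z : V)} := by
      refine (Finset.eq_of_subset_of_card_le hsub ?_).symm
      rw [hc3]
      change G.degree v ≤ 3
      omega
    exact ⟨_, _, _, hxy', hxz', hyz', hNeq, exy, exz, eyz⟩

/-- no two degree-3 vertices are adjacent -/
lemma indep (h3 : G.KConnected 3) (h2 : G.KCyclic 2) (hn : 6 ≤ Fintype.card V)
    {v w : V} (hv : G.degree v = 3) (hw : G.degree w = 3) : ¬ G.Adj v w := by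
  intro hadj
  obtain ⟨a, b, c, hab, hac, hbc, hN, eab, eac, ebc⟩ := deg3_triangle G h3 h2 hn hv
  have key : ∀ x y z : V, G.neighborFinset v = {x, y, z} → G.degree x = 3 → y ≠ z →
      G.Adj x y → G.Adj x z → G.Adj y z → False := by
    intro x y z hN' hx3 hyz exy exz eyz
    have hvy : G.Adj v y := by
      rw [← SimpleGraph.mem_neighborFinset, hN']; simp
    have hvz : G.Adj v z := by
      rw [← SimpleGraph.mem_neighborFinset, hN']; simp
    have hvw : G.Adj v x := by
      rw [← SimpleGraph.mem_neighborFinset, hN']; simp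
    have hNw : G.neighborFinset x = {v, y, z} := by
      have hsub : ({v, y, z} : Finset V) ⊆ G.neighborFinset x := by
        intro u hu
        simp only [Finset.mem_insert, Finset.mem_singleton] at hu
        rw [SimpleGraph.mem_neighborFinset]
        rcases hu with rfl | rfl | rfl
        · exact hvw.symm
        · exact exy
        · exact exz
      have hc3 : ({v, y, z} : Finset V).card = 3 := by
        rw [Finset.card_eq_three]
        exact ⟨_, _, _, (G.ne_of_adj hvy), (G.ne_of_adj hvz), hyz, rfl⟩
      refine (Finset.eq_of_subset_of_card_le hsub ?_).symm
      rw [hc3]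
      change G.degree x ≤ 3
      omega
    -- cut with A = {v, x}, X = {y, z}
    have hXcard : ({y, z} : Set V).ncard < 3 := by
      have h1 := Set.ncard_insert_le y ({z} : Set V)
      have h2 : ({z} : Set V).ncard = 1 := Set.ncard_singleton z
      omega
    have hsmall : (({v, x} : Set V) ∪ {y, z}).ncard ≤ 5 := by
      have h1 := Set.ncard_union_le ({v, x} : Set V) ({y, z} : Set V)
      have h2 := Set.ncard_insert_le v ({x} : Set V)
      have h3 := Set.ncard_insert_le y ({z} : Set V)
      rw [Set.ncard_singleton] at h2 h3
      omega
    obtain ⟨z0, hz0⟩ := exists_outside hn _ hsmall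
    have hwy : x ≠ y := G.ne_of_adj exy
    have hwz : x ≠ z := G.ne_of_adj exz
    have hvy' : v ≠ y := G.ne_of_adj hvy
    have hvz' : v ≠ z := G.ne_of_adj hvz
    refine cut G h3 ({y, z} : Set V) ({v, x} : Set V) hXcard v (Or.inl rfl)
      (by simp [hvy', hvz']) z0 (fun h => hz0 (Or.inl h)) (fun h => hz0 (Or.inr h)) ?_
    intro a' ha' b' hadj'
    have hb' : b' ∈ G.neighborFinset a' := by rw [SimpleGraph.mem_neighborFinset]; exact hadj'
    rcases ha' with rfl | ha'
    · rw [hN'] at hb'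
      simp only [Finset.mem_insert, Finset.mem_singleton] at hb'
      rcases hb' with rfl | rfl | rfl
      · exact Or.inl (Or.inr rfl)
      · exact Or.inr (Or.inl rfl)
      · exact Or.inr (Or.inr rfl)
    · rw [Set.mem_singleton_iff] at ha'
      subst ha'
      rw [hNw] at hb'
      simp only [Finset.mem_insert, Finset.mem_singleton] at hb'
      rcases hb' with rfl | rfl | rfl
      · exact Or.inl (Or.inl rfl)
      · exact Or.inr (Or.inl rfl)
      · exact Or.inr (Or.inr rfl)
  have hw' : w ∈ ({a, b, c} : Finset V) := by
    rw [← hN, SimpleGraph.mem_neighborFinset]; exact hadj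
  simp only [Finset.mem_insert, Finset.mem_singleton] at hw'
  rcases hw' with rfl | rfl | rfl
  · exact key _ b c hN hw hbc eab eac ebc
  · refine key _ a c ?_ hw hac eab.symm ebc eac
    rw [hN]; ext u; simp; tauto
  · refine key _ a b ?_ hw hab eac.symm ebc.symm eab
    rw [hN]; ext u; simp; tauto

/-- neighborhood of a degree-3 vertex, based at a given neighbor -/
lemma deg3_nbhd_of_mem (h3 : G.KConnected 3) (h2 : G.KCyclic 2) (hn : 6 ≤ Fintype.card V)
    {v p : V} (hv : G.degree v = 3) (hadj : G.Adj v p) :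
    ∃ x y : V, x ≠ y ∧ p ≠ x ∧ p ≠ y ∧ G.neighborFinset v = {p, x, y} ∧
      G.Adj p x ∧ G.Adj p y ∧ G.Adj x y := by
  obtain ⟨a, b, c, hab, hac, hbc, hN, eab, eac, ebc⟩ := deg3_triangle G h3 h2 hn hv
  have hp : p ∈ ({a, b, c} : Finset V) := by
    rw [← hN, SimpleGraph.mem_neighborFinset]; exact hadj
  simp only [Finset.mem_insert, Finset.mem_singleton] at hp
  rcases hp with rfl | rfl | rfl
  · exact ⟨b, c, hbc, hab, hac, hN, eab, eac, ebc⟩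
  · refine ⟨a, c, hac, Ne.symm hab, hbc, ?_, eab.symm, ebc, eac⟩
    rw [hN]; ext u; simp; tauto
  · refine ⟨a, b, hab, Ne.symm hac, Ne.symm hbc, ?_, eac.symm, ebc.symm, eab⟩
    rw [hN]; ext u; simp; tauto

/-- a degree-4 vertex with two distinct degree-3 neighbors: they have the same nbhd -/
lemma same_nbhd (h3 : G.KConnected 3) (h2 : G.KCyclic 2) (hn : 6 ≤ Fintype.card V)
    {p v v' : V} (hp : G.degree p = 4) (hv : G.degree v = 3) (hv' : G.degree v' = 3)
    (hne : v ≠ v') (h1 : G.Adj v p) (h2' : G.Adj v' p) :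
    G.neighborFinset v = G.neighborFinset v' := by
  obtain ⟨x, y, hxy, hpx, hpy, hNv, epx, epy, exy⟩ := deg3_nbhd_of_mem G h3 h2 hn hv h1
  obtain ⟨x', y', hxy', hpx', hpy', hNv', epx', epy', exy'⟩ :=
    deg3_nbhd_of_mem G h3 h2 hn hv' h2'
  have hvx : G.Adj v x := by rw [← SimpleGraph.mem_neighborFinset, hNv]; simp
  have hvy : G.Adj v y := by rw [← SimpleGraph.mem_neighborFinset, hNv]; simp
  have hvx' : G.Adj v' x' := by rw [← SimpleGraph.mem_neighborFinset, hNv']; simp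
  have hvy' : G.Adj v' y' := by rw [← SimpleGraph.mem_neighborFinset, hNv']; simp
  have hnadj : ¬ G.Adj v v' := indep G h3 h2 hn hv hv'
  have hxv' : x ≠ v' := fun h => hnadj (h ▸ hvx)
  have hyv' : y ≠ v' := fun h => hnadj (h ▸ hvy)
  have hx'v : x' ≠ v := fun h => hnadj (h ▸ hvx').symm
  have hy'v : y' ≠ v := fun h => hnadj (h ▸ hvy').symm
  have hNp : G.neighborFinset p = {v, v', x, y} := by
    have hsub : ({v, v', x, y} : Finset V) ⊆ G.neighborFinset p := by
      intro u hu
      simp only [Finset.mem_insert, Finset.mem_singleton] at hu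
      rw [SimpleGraph.mem_neighborFinset]
      rcases hu with rfl | rfl | rfl | rfl
      · exact h1.symm
      · exact h2'.symm
      · exact epx
      · exact epy
    have hc4 : ({v, v', x, y} : Finset V).card = 4 := by
      rw [show ({v, v', x, y} : Finset V) = insert v (insert v' ({x, y} : Finset V)) from rfl]
      rw [Finset.card_insert_of_notMem (by simp [hne, G.ne_of_adj hvx, G.ne_of_adj hvy]),
        Finset.card_insert_of_notMem (by simp [Ne.symm hxv', Ne.symm hyv']),
        Finset.card_insert_of_notMem (by simp [hxy]), Finset.card_singleton]
    refine (Finset.eq_of_subset_of_card_le hsub ?_).symm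
    rw [hc4]
    change G.degree p ≤ 4
    omega
  have hx'm : x' ∈ ({v, v', x, y} : Finset V) := by
    rw [← hNp, SimpleGraph.mem_neighborFinset]; exact epx'
  have hy'm : y' ∈ ({v, v', x, y} : Finset V) := by
    rw [← hNp, SimpleGraph.mem_neighborFinset]; exact epy'
  simp only [Finset.mem_insert, Finset.mem_singleton] at hx'm hy'm
  have hx'v' : x' ≠ v' := (G.ne_of_adj hvx').symm
  have hy'v' : y' ≠ v' := (G.ne_of_adj hvy').symm
  rw [hNv, hNv']
  rcases hx'm with rfl | rfl | rfl | rfl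
  · exact absurd rfl hx'v
  · exact absurd rfl hx'v'
  · rcases hy'm with rfl | rfl | rfl | rfl
    · exact absurd rfl hy'v
    · exact absurd rfl hy'v'
    · exact absurd rfl hxy'.symm
    · rfl
  · rcases hy'm with rfl | rfl | rfl | rfl
    · exact absurd rfl hy'v
    · exact absurd rfl hy'v'
    · ext u; simp; tauto
    · exact absurd rfl hxy'

/-- extract the fourth neighbor of a degree-4 vertex -/
lemma fourth {a : V} (ha : G.degree a = 4) (T : Finset V)
    (hsub : T ⊆ G.neighborFinset a) (hT : T.card = 3) :
    ∃ a', a' ∉ T ∧ G.neighborFinset a = insert a' T := by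
  have hdeg : (G.neighborFinset a).card = 4 := ha
  have h1 : (G.neighborFinset a \ T).card = 1 := by
    rw [Finset.card_sdiff_of_subset hsub, hdeg, hT]
  obtain ⟨a', ha'⟩ := Finset.card_eq_one.mp h1
  have hmem : a' ∈ G.neighborFinset a \ T := by rw [ha']; exact Finset.mem_singleton_self a'
  rw [Finset.mem_sdiff] at hmem
  refine ⟨a', hmem.2, ?_⟩
  refine (Finset.eq_of_subset_of_card_le ?_ ?_).symm
  · intro u hu
    rw [Finset.mem_insert] at hu
    rcases hu with rfl | hu
    · exact hmem.1
    · exact hsub hu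
  · rw [Finset.card_insert_of_notMem hmem.2, hT, hdeg]

/-- from a triangle in an induced 3-element set, all pairs are adjacent -/
lemma adj_of_triple {S : Set V} (hcard : S.ncard = 3)
    (h : ∃ x y z : ↥S, x ≠ y ∧ x ≠ z ∧ y ≠ z ∧ (G.induce S).Adj x y ∧
      (G.induce S).Adj x z ∧ (G.induce S).Adj y z) :
    ∀ u ∈ S, ∀ w ∈ S, u ≠ w → G.Adj u w := by
  obtain ⟨x, y, z, hxy, hxz, hyz, e1, e2, e3⟩ := h
  have exy : G.Adj (x : V) (y : V) := e1
  have exz : G.Adj (x : V) (z : V) := e2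
  have eyz : G.Adj (y : V) (z : V) := e3
  have hxy' : (x : V) ≠ (y : V) := fun h' => hxy (Subtype.ext h')
  have hxz' : (x : V) ≠ (z : V) := fun h' => hxz (Subtype.ext h')
  have hyz' : (y : V) ≠ (z : V) := fun h' => hyz (Subtype.ext h')
  have hsub : ({(x : V), (y : V), (z : V)} : Set V) ⊆ S := by
    intro u hu
    rcases hu with rfl | rfl | rfl
    · exact x.2
    · exact y.2
    · exact z.2
  have hc3 : ({(x : V), (y : V), (z : V)} : Set V).ncard = 3 := by
    rw [Set.ncard_insert_of_notMem (by simp [hxy', hxz']),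
      Set.ncard_insert_of_notMem (by simp [hyz']), Set.ncard_singleton]
  have hset : ({(x : V), (y : V), (z : V)} : Set V) = S := by
    apply Set.eq_of_subset_of_ncard_le hsub (by rw [hc3, hcard]) (Set.toFinite S)
  intro u hu w hw huw
  rw [← hset] at hu hw
  rcases hu with rfl | rfl | rfl <;> rcases hw with rfl | rfl | rfl <;>
    first
      | exact absurd rfl huw
      | exact exy | exact exz | exact eyz
      | exact exy.symm | exact exz.symm | exact eyz.symm

/-- L1: not all three triangle vertices over a degree-3 vertex have degree 4 -/
lemma L1 (h3 : G.KConnected 3) (h2 : G.KCyclic 2) (hn : 6 ≤ Fintype.card V)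
    {v a b c : V} (hv : G.degree v = 3) (hN : G.neighborFinset v = {a, b, c})
    (hab : a ≠ b) (hac : a ≠ c) (hbc : b ≠ c)
    (eab : G.Adj a b) (eac : G.Adj a c) (ebc : G.Adj b c)
    (ha : G.degree a = 4) (hb : G.degree b = 4) (hc : G.degree c = 4) : False := by
  have hva : G.Adj v a := by rw [← SimpleGraph.mem_neighborFinset, hN]; simp
  have hvb : G.Adj v b := by rw [← SimpleGraph.mem_neighborFinset, hN]; simp
  have hvc : G.Adj v c := by rw [← SimpleGraph.mem_neighborFinset, hN]; simp
  have hTa : ({v, b, c} : Finset V).card = 3 := by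
    rw [Finset.card_insert_of_notMem (by simp [G.ne_of_adj hvb, G.ne_of_adj hvc]),
      Finset.card_insert_of_notMem (by simp [hbc]), Finset.card_singleton]
  have hTb : ({v, a, c} : Finset V).card = 3 := by
    rw [Finset.card_insert_of_notMem (by simp [G.ne_of_adj hva, G.ne_of_adj hvc]),
      Finset.card_insert_of_notMem (by simp [hac]), Finset.card_singleton]
  have hTc : ({v, a, b} : Finset V).card = 3 := by
    rw [Finset.card_insert_of_notMem (by simp [G.ne_of_adj hva, G.ne_of_adj hvb]),
      Finset.card_insert_of_notMem (by simp [hab]), Finset.card_singleton]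
  obtain ⟨a', ha'T, hNa⟩ := fourth G ha {v, b, c} (by
    intro u hu; simp only [Finset.mem_insert, Finset.mem_singleton] at hu
    rw [SimpleGraph.mem_neighborFinset]
    rcases hu with rfl | rfl | rfl
    · exact hva.symm
    · exact eab
    · exact eac) hTa
  obtain ⟨b', hb'T, hNb⟩ := fourth G hb {v, a, c} (by
    intro u hu; simp only [Finset.mem_insert, Finset.mem_singleton] at hu
    rw [SimpleGraph.mem_neighborFinset]
    rcases hu with rfl | rfl | rfl
    · exact hvb.symm
    · exact eab.symm
    · exact ebc) hTb
  obtain ⟨c', hc'T, hNc⟩ := fourth G hc {v, a, b} (by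
    intro u hu; simp only [Finset.mem_insert, Finset.mem_singleton] at hu
    rw [SimpleGraph.mem_neighborFinset]
    rcases hu with rfl | rfl | rfl
    · exact hvc.symm
    · exact eac.symm
    · exact ebc.symm) hTc
  simp only [Finset.mem_insert, Finset.mem_singleton, not_or] at ha'T hb'T hc'T
  have ha'a : a' ≠ a := by
    intro h
    have : a' ∈ G.neighborFinset a := by rw [hNa]; simp
    rw [SimpleGraph.mem_neighborFinset] at this
    exact G.ne_of_adj this (by rw [h])
  have haa' : G.Adj a a' := by
    have : a' ∈ G.neighborFinset a := by rw [hNa]; simp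
    rw [SimpleGraph.mem_neighborFinset] at this
    exact this
  -- use 2-cyclicity with S = {v, a}
  have hNS : G.setNbhd {v, a} = ({b, c, a'} : Set V) := by
    ext u
    constructor
    · rintro ⟨hu1, t, ht, hadj⟩
      simp only [Set.mem_insert_iff, Set.mem_singleton_iff, not_or] at hu1 ⊢
      rcases ht with rfl | ht
      · have hu2 : u ∈ G.neighborFinset t := by
          rw [SimpleGraph.mem_neighborFinset]; exact hadj
        rw [hN] at hu2
        simp only [Finset.mem_insert, Finset.mem_singleton] at hu2
        tauto
      · rw [Set.mem_singleton_iff] at ht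
        subst ht
        have hu2 : u ∈ G.neighborFinset t := by
          rw [SimpleGraph.mem_neighborFinset]; exact hadj
        rw [hNa] at hu2
        simp only [Finset.mem_insert, Finset.mem_singleton] at hu2
        tauto
    · intro hu
      simp only [Set.mem_insert_iff, Set.mem_singleton_iff] at hu
      rcases hu with rfl | rfl | rfl
      · exact ⟨by simp [Set.mem_insert_iff, (G.ne_of_adj hvb).symm, Ne.symm hab],
          v, Or.inl rfl, hvb⟩
      · exact ⟨by simp [Set.mem_insert_iff, (G.ne_of_adj hvc).symm, Ne.symm hac],
          a, Or.inr rfl, eac⟩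
      · exact ⟨by simp [Set.mem_insert_iff, ha'T.1, ha'a], a, Or.inr rfl, haa'⟩
  have hScard : ({v, a} : Set V).ncard ≤ 2 := by
    have h1 := Set.ncard_insert_le v ({a} : Set V)
    rw [Set.ncard_singleton] at h1
    omega
  have hNScard : (({b, c, a'} : Set V)).ncard ≤ 3 := by
    have h1 := Set.ncard_insert_le b ({c, a'} : Set V)
    have h2 := Set.ncard_insert_le c ({a'} : Set V)
    rw [Set.ncard_singleton] at h2
    omega
  rcases h2 {v, a} ⟨v, Or.inl rfl⟩ hScard with hdom | hcyc
  · rw [hNS] at hdom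
    have h1 := Set.ncard_union_le ({v, a} : Set V) ({b, c, a'} : Set V)
    rw [hdom, Set.ncard_univ, Nat.card_eq_fintype_card] at h1
    omega
  · rw [hNS] at hcyc
    have hNS3 : (({b, c, a'} : Set V)).ncard = 3 := by
      rw [Set.ncard_insert_of_notMem (by simp [hbc, Ne.symm ha'T.2.1]),
        Set.ncard_insert_of_notMem (by simp [Ne.symm ha'T.2.2]), Set.ncard_singleton]
    have hWcard : Fintype.card ↥({b, c, a'} : Set V) ≤ 3 := by
      rw [← Nat.card_eq_fintype_card, Nat.card_coe_set_eq, hNS3]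
    have hadjall := adj_of_triple G hNS3 (triangle_of_not_acyclic _ hWcard hcyc)
    have hba' : G.Adj b a' := hadjall b (by simp) a' (by simp) (Ne.symm ha'T.2.1)
    have hca' : G.Adj c a' := hadjall c (by simp) a' (by simp) (Ne.symm ha'T.2.2)
    -- a' is also the fourth neighbor of b and of c
    have hab' : a' = b' := by
      have : a' ∈ G.neighborFinset b := by
        rw [SimpleGraph.mem_neighborFinset]; exact hba'
      rw [hNb] at this
      simp only [Finset.mem_insert, Finset.mem_singleton] at this
      rcases this with h | h | h | h
      · exact h
      · exact absurd h ha'T.1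
      · exact absurd h ha'a
      · exact absurd h ha'T.2.2
    have hac' : a' = c' := by
      have : a' ∈ G.neighborFinset c := by
        rw [SimpleGraph.mem_neighborFinset]; exact hca'
      rw [hNc] at this
      simp only [Finset.mem_insert, Finset.mem_singleton] at this
      rcases this with h | h | h | h
      · exact h
      · exact absurd h ha'T.1
      · exact absurd h ha'a
      · exact absurd h ha'T.2.1
    -- cut with A = {v, a, b, c}, X = {a'}
    have hsmall : (({v, a, b, c} : Set V) ∪ {a'}).ncard ≤ 5 := by
      have h1 := Set.ncard_union_le ({v, a, b, c} : Set V) ({a'} : Set V)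
      have h2 := Set.ncard_insert_le v ({a, b, c} : Set V)
      have h3 := Set.ncard_insert_le a ({b, c} : Set V)
      have h4 := Set.ncard_insert_le b ({c} : Set V)
      rw [Set.ncard_singleton] at h1 h4
      omega
    obtain ⟨z0, hz0⟩ := exists_outside hn _ hsmall
    refine cut G h3 ({a'} : Set V) ({v, a, b, c} : Set V)
      (by rw [Set.ncard_singleton]; omega) v (Or.inl rfl)
      (by simp [Ne.symm ha'T.1]) z0 (fun h => hz0 (Or.inl h)) (fun h => hz0 (Or.inr h)) ?_
    intro t ht u hadj
    have hu : u ∈ G.neighborFinset t := by rw [SimpleGraph.mem_neighborFinset]; exact hadj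
    simp only [Set.mem_insert_iff, Set.mem_singleton_iff] at ht
    rcases ht with rfl | rfl | rfl | rfl
    · rw [hN] at hu
      simp only [Finset.mem_insert, Finset.mem_singleton] at hu
      rcases hu with rfl | rfl | rfl <;> simp
    · rw [hNa] at hu
      simp only [Finset.mem_insert, Finset.mem_singleton] at hu
      rcases hu with rfl | rfl | rfl | rfl <;> simp
    · rw [hNb, ← hab'] at hu
      simp only [Finset.mem_insert, Finset.mem_singleton] at hu
      rcases hu with rfl | rfl | rfl | rfl <;> simp
    · rw [hNc, ← hac'] at hu
      simp only [Finset.mem_insert, Finset.mem_singleton] at hu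
      rcases hu with rfl | rfl | rfl | rfl <;> simp

/-- L2: over a class of size 2, at most one triangle vertex has degree 4 -/
lemma L2 (h3 : G.KConnected 3) (h2 : G.KCyclic 2) (hn : 6 ≤ Fintype.card V)
    {v w a b : V} (hv : G.degree v = 3) (hw : G.degree w = 3) (hvw : v ≠ w)
    (hNN : G.neighborFinset v = G.neighborFinset w)
    (hab : a ≠ b) (hav : a ∈ G.neighborFinset v) (hbv : b ∈ G.neighborFinset v)
    (ha : G.degree a = 4) (hb : G.degree b = 4) : False := by
  -- get the triangle of v based at a, identify b among the other two
  have hva : G.Adj v a := by rw [← SimpleGraph.mem_neighborFinset]; exact hav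
  obtain ⟨x, y, hxy, hax, hay, hNv, eax, eay, exy⟩ := deg3_nbhd_of_mem G h3 h2 hn hv hva
  have hbxy : b = x ∨ b = y := by
    have := hbv
    rw [hNv] at this
    simp only [Finset.mem_insert, Finset.mem_singleton] at this
    rcases this with rfl | h | h
    · exact absurd rfl hab
    · exact Or.inl h
    · exact Or.inr h
  have key : ∀ c : V, G.neighborFinset v = {a, b, c} → b ≠ c → a ≠ c →
      G.Adj a b → G.Adj a c → G.Adj b c → False := by
    intro c hNv' hbc hac eab eac ebc
    have hvb : G.Adj v b := by rw [← SimpleGraph.mem_neighborFinset, hNv']; simp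
    have hvc : G.Adj v c := by rw [← SimpleGraph.mem_neighborFinset, hNv']; simp
    have hwa : G.Adj w a := by
      rw [← SimpleGraph.mem_neighborFinset, ← hNN, hNv']; simp
    have hwb : G.Adj w b := by
      rw [← SimpleGraph.mem_neighborFinset, ← hNN, hNv']; simp
    have hwc : G.Adj w c := by
      rw [← SimpleGraph.mem_neighborFinset, ← hNN, hNv']; simp
    have hNa : G.neighborFinset a = {v, w, b, c} := by
      have hsub : ({v, w, b, c} : Finset V) ⊆ G.neighborFinset a := by
        intro u hu
        simp only [Finset.mem_insert, Finset.mem_singleton] at hu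
        rw [SimpleGraph.mem_neighborFinset]
        rcases hu with rfl | rfl | rfl | rfl
        · exact hva.symm
        · exact hwa.symm
        · exact eab
        · exact eac
      have hc4 : ({v, w, b, c} : Finset V).card = 4 := by
        rw [Finset.card_insert_of_notMem
            (by simp [hvw, G.ne_of_adj hvb, G.ne_of_adj hvc]),
          Finset.card_insert_of_notMem (by simp [G.ne_of_adj hwb, G.ne_of_adj hwc]),
          Finset.card_insert_of_notMem (by simp [hbc]), Finset.card_singleton]
      refine (Finset.eq_of_subset_of_card_le hsub ?_).symm
      rw [hc4]
      change G.degree a ≤ 4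
      omega
    have hNb : G.neighborFinset b = {v, w, a, c} := by
      have hsub : ({v, w, a, c} : Finset V) ⊆ G.neighborFinset b := by
        intro u hu
        simp only [Finset.mem_insert, Finset.mem_singleton] at hu
        rw [SimpleGraph.mem_neighborFinset]
        rcases hu with rfl | rfl | rfl | rfl
        · exact hvb.symm
        · exact hwb.symm
        · exact eab.symm
        · exact ebc
      have hc4 : ({v, w, a, c} : Finset V).card = 4 := by
        rw [Finset.card_insert_of_notMem
            (by simp [hvw, G.ne_of_adj hva, G.ne_of_adj hvc]),
          Finset.card_insert_of_notMem (by simp [G.ne_of_adj hwa, G.ne_of_adj hwc]),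
          Finset.card_insert_of_notMem (by simp [hac]), Finset.card_singleton]
      refine (Finset.eq_of_subset_of_card_le hsub ?_).symm
      rw [hc4]
      change G.degree b ≤ 4
      omega
    -- cut with A = {v, w, a, b}, X = {c}
    have hsmall : (({v, w, a, b} : Set V) ∪ {c}).ncard ≤ 5 := by
      have h1 := Set.ncard_union_le ({v, w, a, b} : Set V) ({c} : Set V)
      have h2 := Set.ncard_insert_le v ({w, a, b} : Set V)
      have h3 := Set.ncard_insert_le w ({a, b} : Set V)
      have h4 := Set.ncard_insert_le a ({b} : Set V)
      rw [Set.ncard_singleton] at h1 h4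
      omega
    obtain ⟨z0, hz0⟩ := exists_outside hn _ hsmall
    refine cut G h3 ({c} : Set V) ({v, w, a, b} : Set V)
      (by rw [Set.ncard_singleton]; omega) v (Or.inl rfl)
      (by simp [G.ne_of_adj hvc]) z0 (fun h => hz0 (Or.inl h)) (fun h => hz0 (Or.inr h)) ?_
    intro t ht u hadj
    have hu : u ∈ G.neighborFinset t := by rw [SimpleGraph.mem_neighborFinset]; exact hadj
    simp only [Set.mem_insert_iff, Set.mem_singleton_iff] at ht
    rcases ht with rfl | rfl | rfl | rfl
    · rw [hNv'] at hu
      simp only [Finset.mem_insert, Finset.mem_singleton] at hu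
      rcases hu with rfl | rfl | rfl <;> simp
    · rw [← hNN, hNv'] at hu
      simp only [Finset.mem_insert, Finset.mem_singleton] at hu
      rcases hu with rfl | rfl | rfl <;> simp
    · rw [hNa] at hu
      simp only [Finset.mem_insert, Finset.mem_singleton] at hu
      rcases hu with rfl | rfl | rfl | rfl <;> simp
    · rw [hNb] at hu
      simp only [Finset.mem_insert, Finset.mem_singleton] at hu
      rcases hu with rfl | rfl | rfl | rfl <;> simp
  rcases hbxy with rfl | rfl
  · exact key y hNv hxy hay eax eay exy
  · refine key x ?_ (Ne.symm hxy) hax eay eax exy.symm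
    rw [hNv]; ext u; simp; tauto

/-- the set of degree-3 vertices -/
def Dset : Finset V := Finset.univ.filter (fun v => G.degree v = 3)

/-- number of degree-3 neighbors -/
def kk (a : V) : ℕ := (G.neighborFinset a ∩ Dset G).card

def Poor (a : V) : Prop := G.degree a = 4 ∧ 1 ≤ kk G a

def Rich (a : V) : Prop := 5 ≤ G.degree a

def MateP (p r : V) : Prop :=
  p ≠ r ∧ ∃ v, v ∈ Dset G ∧ p ∈ G.neighborFinset v ∧ r ∈ G.neighborFinset v

def BadMate (p r : V) : Prop :=
  ∃ v, v ∈ Dset G ∧ p ∈ G.neighborFinset v ∧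
    ∃ w, w ∈ G.neighborFinset v ∧ w ≠ p ∧ w ≠ r ∧ Poor G w

open Classical in
/-- discharging: amount sent from a poor vertex `p` to a rich vertex `r` -/
noncomputable def charge (p r : V) : ℤ :=
  if Poor G p ∧ Rich G r ∧ MateP G p r then
    (if kk G p = 2 then 2 else if BadMate G p r then 2 else 1) else 0

lemma mem_Dset {v : V} : v ∈ Dset G ↔ G.degree v = 3 := by
  simp [Dset]

lemma charge_nonneg (p r : V) : 0 ≤ charge G p r := by
  unfold charge
  split_ifs <;> norm_num

lemma charge_le_two (p r : V) : charge G p r ≤ 2 := by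
  unfold charge
  split_ifs <;> norm_num

lemma charge_eq_zero_of_not_poor {p : V} (h : ¬ Poor G p) (r : V) : charge G p r = 0 := by
  unfold charge
  rw [if_neg (by tauto)]

lemma charge_eq_zero_of_not_rich {r : V} (h : ¬ Rich G r) (p : V) : charge G p r = 0 := by
  unfold charge
  rw [if_neg (by tauto)]

lemma charge_eq_zero_of_not_mate {p r : V} (h : ¬ MateP G p r) : charge G p r = 0 := by
  unfold charge
  rw [if_neg (by tauto)]

/-- any two distinct neighbors of a degree-3 vertex are adjacent -/
lemma nbhd_clique (h3 : G.KConnected 3) (h2 : G.KCyclic 2) (hn : 6 ≤ Fintype.card V)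
    {v p r : V} (hv : G.degree v = 3) (hp : p ∈ G.neighborFinset v)
    (hr : r ∈ G.neighborFinset v) (hpr : p ≠ r) : G.Adj p r := by
  have hvp : G.Adj v p := by rwa [← SimpleGraph.mem_neighborFinset]
  obtain ⟨x, y, hxy, hpx, hpy, hNv, epx, epy, exy⟩ := deg3_nbhd_of_mem G h3 h2 hn hv hvp
  rw [hNv] at hr
  simp only [Finset.mem_insert, Finset.mem_singleton] at hr
  rcases hr with rfl | rfl | rfl
  · exact absurd rfl hpr
  · exact epx
  · exact epy

/-- neighbors of degree-3 vertices are not degree-3 -/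
lemma triangle_not_D (h3 : G.KConnected 3) (h2 : G.KCyclic 2) (hn : 6 ≤ Fintype.card V)
    {v x : V} (hv : v ∈ Dset G) (hx : x ∈ G.neighborFinset v) : x ∉ Dset G := by
  rw [mem_Dset] at hv ⊢
  intro hx3
  exact indep G h3 h2 hn hv hx3 ((SimpleGraph.mem_neighborFinset _ _ _).mp hx)

lemma kk_add_two_le (h3 : G.KConnected 3) (h2 : G.KCyclic 2) (hn : 6 ≤ Fintype.card V)
    {a : V} (h : 1 ≤ kk G a) : kk G a + 2 ≤ G.degree a := by
  have hne : (G.neighborFinset a ∩ Dset G).Nonempty := by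
    rw [← Finset.card_pos]; exact h
  obtain ⟨v, hv⟩ := hne
  rw [Finset.mem_inter] at hv
  have hv3 : G.degree v = 3 := (mem_Dset G).mp hv.2
  have hva : G.Adj v a := ((SimpleGraph.mem_neighborFinset _ _ _).mp hv.1).symm
  obtain ⟨x, y, hxy, hax, hay, hNv, eax, eay, exy⟩ := deg3_nbhd_of_mem G h3 h2 hn hv3 hva
  have hxm : x ∈ G.neighborFinset a := by
    rw [SimpleGraph.mem_neighborFinset]; exact eax
  have hym : y ∈ G.neighborFinset a := by
    rw [SimpleGraph.mem_neighborFinset]; exact eay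
  have hxD : x ∉ Dset G := triangle_not_D G h3 h2 hn hv.2 (by rw [hNv]; simp)
  have hyD : y ∉ Dset G := triangle_not_D G h3 h2 hn hv.2 (by rw [hNv]; simp)
  have hsub : ({x, y} : Finset V) ∪ (G.neighborFinset a ∩ Dset G) ⊆ G.neighborFinset a := by
    intro u hu
    rw [Finset.mem_union] at hu
    rcases hu with hu | hu
    · simp only [Finset.mem_insert, Finset.mem_singleton] at hu
      rcases hu with rfl | rfl
      · exact hxm
      · exact hym
    · exact (Finset.mem_inter.mp hu).1
  have hdisj : Disjoint ({x, y} : Finset V) (G.neighborFinset a ∩ Dset G) := by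
    rw [Finset.disjoint_left]
    intro u hu hu2
    simp only [Finset.mem_insert, Finset.mem_singleton] at hu
    rcases hu with rfl | rfl
    · exact hxD (Finset.mem_inter.mp hu2).2
    · exact hyD (Finset.mem_inter.mp hu2).2
  have hcard := Finset.card_le_card hsub
  rw [Finset.card_union_of_disjoint hdisj] at hcard
  have h2' : ({x, y} : Finset V).card = 2 := by
    rw [Finset.card_insert_of_notMem (by simp [hxy]), Finset.card_singleton]
  unfold kk
  change _ + 2 ≤ (G.neighborFinset a).card
  omega

lemma poor_kk (h3 : G.KConnected 3) (h2 : G.KCyclic 2) (hn : 6 ≤ Fintype.card V)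
    {a : V} (h : Poor G a) : kk G a = 1 ∨ kk G a = 2 := by
  have := kk_add_two_le G h3 h2 hn h.2
  rw [h.1] at this
  have := h.2
  omega

/-- a non-poor triangle neighbor with a degree-3 neighbor is rich -/
lemma rich_of_not_poor (h3 : G.KConnected 3) (hn : 6 ≤ Fintype.card V)
    {a : V} (hD : a ∉ Dset G) (hp : ¬ Poor G a) (hk : 1 ≤ kk G a) : Rich G a := by
  have h4 := mindeg3 G h3 hn a
  rw [mem_Dset] at hD
  have h5 : G.degree a ≠ 4 := fun h => hp ⟨h, hk⟩
  unfold Rich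
  omega

lemma sent_ge (h3 : G.KConnected 3) (h2 : G.KCyclic 2) (hn : 6 ≤ Fintype.card V)
    {p : V} (hp : Poor G p) :
    (2 : ℤ) * kk G p ≤ ∑ r ∈ Finset.univ, charge G p r := by
  have hsum2 : ∀ x y : V, x ≠ y → ∑ r ∈ ({x, y} : Finset V), charge G p r ≤
      ∑ r ∈ Finset.univ, charge G p r := by
    intro x y _
    exact Finset.sum_le_sum_of_subset_of_nonneg (Finset.subset_univ _)
      (fun i _ _ => charge_nonneg G p i)
  have hsum1 : ∀ x : V, charge G p x ≤ ∑ r ∈ Finset.univ, charge G p r := by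
    intro x
    have := Finset.sum_le_sum_of_subset_of_nonneg (Finset.subset_univ ({x} : Finset V))
      (fun i _ _ => charge_nonneg G p i)
    rwa [Finset.sum_singleton] at this
  rcases poor_kk G h3 h2 hn hp with hk1 | hk2
  · -- kk p = 1 : a unique degree-3 neighbor v
    obtain ⟨v, hveq⟩ := Finset.card_eq_one.mp hk1
    have hvmem : v ∈ G.neighborFinset p ∩ Dset G := by
      rw [hveq]; exact Finset.mem_singleton_self v
    rw [Finset.mem_inter] at hvmem
    have hv3 : G.degree v = 3 := (mem_Dset G).mp hvmem.2
    have hvp : G.Adj v p := ((SimpleGraph.mem_neighborFinset _ _ _).mp hvmem.1).symm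
    obtain ⟨x, y, hxy, hax, hay, hNv, epx, epy, exy⟩ := deg3_nbhd_of_mem G h3 h2 hn hv3 hvp
    have hpm : p ∈ G.neighborFinset v := by rw [hNv]; simp
    have hxm : x ∈ G.neighborFinset v := by rw [hNv]; simp
    have hym : y ∈ G.neighborFinset v := by rw [hNv]; simp
    have hxD : x ∉ Dset G := triangle_not_D G h3 h2 hn hvmem.2 hxm
    have hyD : y ∉ Dset G := triangle_not_D G h3 h2 hn hvmem.2 hym
    have hkx : 1 ≤ kk G x := by
      apply Finset.card_pos.mpr
      exact ⟨v, Finset.mem_inter.mpr ⟨by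
        rw [SimpleGraph.mem_neighborFinset]
        exact ((SimpleGraph.mem_neighborFinset _ _ _).mp hxm).symm, hvmem.2⟩⟩
    have hky : 1 ≤ kk G y := by
      apply Finset.card_pos.mpr
      exact ⟨v, Finset.mem_inter.mpr ⟨by
        rw [SimpleGraph.mem_neighborFinset]
        exact ((SimpleGraph.mem_neighborFinset _ _ _).mp hym).symm, hvmem.2⟩⟩
    by_cases hPx : Poor G x
    · have hPy : ¬ Poor G y := by
        intro hPy
        exact L1 G h3 h2 hn hv3 hNv hax hay hxy epx epy exy hp.1 hPx.1 hPy.1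
      have hRy : Rich G y := rich_of_not_poor G h3 hn hyD hPy hky
      have hch : charge G p y = 2 := by
        unfold charge
        rw [if_pos ⟨hp, hRy, hay, v, hvmem.2, hpm, hym⟩, if_neg (by omega),
          if_pos ⟨v, hvmem.2, hpm, x, hxm, Ne.symm hax, hxy, hPx⟩]
      have h1 := hsum1 y
      rw [hk1]
      omega
    · have hRx : Rich G x := rich_of_not_poor G h3 hn hxD hPx hkx
      by_cases hPy : Poor G y
      · have hch : charge G p x = 2 := by
          unfold charge
          rw [if_pos ⟨hp, hRx, hax, v, hvmem.2, hpm, hxm⟩, if_neg (by omega),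
            if_pos ⟨v, hvmem.2, hpm, y, hym, Ne.symm hay, Ne.symm hxy, hPy⟩]
        have h1 := hsum1 x
        rw [hk1]
        omega
      · have hRy : Rich G y := rich_of_not_poor G h3 hn hyD hPy hky
        have hchx : 1 ≤ charge G p x := by
          unfold charge
          rw [if_pos ⟨hp, hRx, hax, v, hvmem.2, hpm, hxm⟩]
          split_ifs <;> norm_num
        have hchy : 1 ≤ charge G p y := by
          unfold charge
          rw [if_pos ⟨hp, hRy, hay, v, hvmem.2, hpm, hym⟩]
          split_ifs <;> norm_num
        have hpair : ∑ r ∈ ({x, y} : Finset V), charge G p r = charge G p x + charge G p y :=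
          Finset.sum_pair hxy
        have := hsum2 x y hxy
        rw [hpair] at this
        rw [hk1]
        omega
  · -- kk p = 2 : two degree-3 neighbors with a common neighborhood
    obtain ⟨v, v', hvv', hveq⟩ := Finset.card_eq_two.mp hk2
    have hvmem : v ∈ G.neighborFinset p ∩ Dset G := by rw [hveq]; simp
    have hv'mem : v' ∈ G.neighborFinset p ∩ Dset G := by rw [hveq]; simp
    rw [Finset.mem_inter] at hvmem hv'mem
    have hv3 : G.degree v = 3 := (mem_Dset G).mp hvmem.2
    have hv'3 : G.degree v' = 3 := (mem_Dset G).mp hv'mem.2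
    have hvp : G.Adj v p := ((SimpleGraph.mem_neighborFinset _ _ _).mp hvmem.1).symm
    have hv'p : G.Adj v' p := ((SimpleGraph.mem_neighborFinset _ _ _).mp hv'mem.1).symm
    have hNN := same_nbhd G h3 h2 hn hp.1 hv3 hv'3 hvv' hvp hv'p
    obtain ⟨x, y, hxy, hax, hay, hNv, epx, epy, exy⟩ := deg3_nbhd_of_mem G h3 h2 hn hv3 hvp
    have hpm : p ∈ G.neighborFinset v := by rw [hNv]; simp
    have hxm : x ∈ G.neighborFinset v := by rw [hNv]; simp
    have hym : y ∈ G.neighborFinset v := by rw [hNv]; simp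
    have hxD : x ∉ Dset G := triangle_not_D G h3 h2 hn hvmem.2 hxm
    have hyD : y ∉ Dset G := triangle_not_D G h3 h2 hn hvmem.2 hym
    have hkx : 1 ≤ kk G x := by
      apply Finset.card_pos.mpr
      exact ⟨v, Finset.mem_inter.mpr ⟨by
        rw [SimpleGraph.mem_neighborFinset]
        exact ((SimpleGraph.mem_neighborFinset _ _ _).mp hxm).symm, hvmem.2⟩⟩
    have hky : 1 ≤ kk G y := by
      apply Finset.card_pos.mpr
      exact ⟨v, Finset.mem_inter.mpr ⟨by
        rw [SimpleGraph.mem_neighborFinset]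
        exact ((SimpleGraph.mem_neighborFinset _ _ _).mp hym).symm, hvmem.2⟩⟩
    have hPx : ¬ Poor G x := by
      intro hPx
      exact L2 G h3 h2 hn hv3 hv'3 hvv' hNN hax hpm hxm hp.1 hPx.1
    have hPy : ¬ Poor G y := by
      intro hPy
      exact L2 G h3 h2 hn hv3 hv'3 hvv' hNN hay hpm hym hp.1 hPy.1
    have hRx : Rich G x := rich_of_not_poor G h3 hn hxD hPx hkx
    have hRy : Rich G y := rich_of_not_poor G h3 hn hyD hPy hky
    have hchx : charge G p x = 2 := by
      unfold charge
      rw [if_pos ⟨hp, hRx, hax, v, hvmem.2, hpm, hxm⟩, if_pos hk2]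
    have hchy : charge G p y = 2 := by
      unfold charge
      rw [if_pos ⟨hp, hRy, hay, v, hvmem.2, hpm, hym⟩, if_pos hk2]
    have hpair : ∑ r ∈ ({x, y} : Finset V), charge G p r = charge G p x + charge G p y :=
      Finset.sum_pair hxy
    have := hsum2 x y hxy
    rw [hpair, hchx, hchy] at this
    rw [hk2]
    omega


lemma charge_ne_zero {p r : V} (h : charge G p r ≠ 0) :
    Poor G p ∧ Rich G r ∧ MateP G p r := by
  by_contra hc
  exact h (by unfold charge; rw [if_neg hc])

set_option maxHeartbeats 1000000 in
lemma received_le (h3 : G.KConnected 3) (h2 : G.KCyclic 2) (hn : 6 ≤ Fintype.card V)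
    {r : V} (hr : Rich G r) :
    ∑ p ∈ Finset.univ, charge G p r ≤
      6 * (G.degree r : ℤ) - 24 - 2 * (kk G r : ℤ) := by
  have hsub_sum : ∀ T : Finset V, (∀ p, charge G p r ≠ 0 → p ∈ T) →
      ∑ p ∈ Finset.univ, charge G p r = ∑ p ∈ T, charge G p r := by
    intro T hT
    symm
    apply Finset.sum_subset (Finset.subset_univ T)
    intro x _ hx
    by_contra h0
    exact hx (hT x h0)
  have hb2 : ∀ T : Finset V, ∑ p ∈ T, charge G p r ≤ (T.card : ℤ) * 2 := by
    intro T
    have := Finset.sum_le_card_nsmul T (fun p => charge G p r) 2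
      (fun x _ => charge_le_two G x r)
    simpa [nsmul_eq_mul] using this
  have hchadj : ∀ p, charge G p r ≠ 0 → p ∈ G.neighborFinset r \ Dset G := by
    intro p hne
    obtain ⟨hPp, _, hpr, v, hvD, hpN, hrN⟩ := charge_ne_zero G hne
    have hadj : G.Adj p r := nbhd_clique G h3 h2 hn ((mem_Dset G).mp hvD) hpN hrN hpr
    rw [Finset.mem_sdiff, SimpleGraph.mem_neighborFinset, mem_Dset]
    exact ⟨hadj.symm, by rw [hPp.1]; omega⟩
  have hkdef : (G.neighborFinset r ∩ Dset G).card = kk G r := rfl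
  have hdegdef : (G.neighborFinset r).card = G.degree r := rfl
  have hkle : kk G r ≤ G.degree r := by
    rw [← hkdef, ← hdegdef]
    exact Finset.card_le_card (Finset.inter_subset_left)
  have hdeg5 : 5 ≤ G.degree r := hr
  by_cases hd6 : 6 ≤ G.degree r
  · -- easy case: degree at least 6
    rw [hsub_sum (G.neighborFinset r \ Dset G) hchadj]
    have hcard : (G.neighborFinset r \ Dset G).card = G.degree r - kk G r := by
      rw [← hdegdef, ← hkdef]
      have := Finset.card_sdiff_add_card_inter (G.neighborFinset r) (Dset G)
      omega
    have := hb2 (G.neighborFinset r \ Dset G)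
    rw [hcard] at this
    have hc : ((G.degree r - kk G r : ℕ) : ℤ) = (G.degree r : ℤ) - kk G r := by
      push_cast [Nat.cast_sub hkle]
      ring
    rw [hc] at this
    omega
  · -- degree exactly 5
    have hdeg : G.degree r = 5 := by omega
    have hk3 : kk G r ≤ 3 := by
      by_cases h1 : 1 ≤ kk G r
      · have := kk_add_two_le G h3 h2 hn h1
        omega
      · omega
    by_cases hk0 : kk G r = 0
    · -- no degree-3 neighbors at all: no charges
      rw [hsub_sum ∅ ?_]
      · simp
        rw [hdeg, hk0]
        norm_num
      · intro p hne
        obtain ⟨hPp, _, hpr, v, hvD, hpN, hrN⟩ := charge_ne_zero G hne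
        exfalso
        have hvr : v ∈ G.neighborFinset r ∩ Dset G := by
          rw [Finset.mem_inter, SimpleGraph.mem_neighborFinset]
          exact ⟨((SimpleGraph.mem_neighborFinset _ _ _).mp hrN).symm, hvD⟩
        rw [← hkdef] at hk0
        rw [Finset.card_eq_zero.mp hk0] at hvr
        exact absurd hvr (Finset.notMem_empty v)
    · have hk123 : kk G r = 1 ∨ kk G r = 2 ∨ kk G r = 3 := by omega
      rcases hk123 with hk | hk | hk
      · -- kk r = 1
        obtain ⟨v0, hv0eq⟩ := Finset.card_eq_one.mp (hkdef.trans hk)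
        have hv0 : v0 ∈ G.neighborFinset r ∩ Dset G := by
          rw [hv0eq]; exact Finset.mem_singleton_self v0
        rw [Finset.mem_inter] at hv0
        have hv03 : G.degree v0 = 3 := (mem_Dset G).mp hv0.2
        have hrv0 : r ∈ G.neighborFinset v0 := by
          rw [SimpleGraph.mem_neighborFinset]
          exact ((SimpleGraph.mem_neighborFinset _ _ _).mp hv0.1).symm
        have hT : ∀ p, charge G p r ≠ 0 → p ∈ (G.neighborFinset v0).erase r := by
          intro p hne
          obtain ⟨hPp, _, hpr, v, hvD, hpN, hrN⟩ := charge_ne_zero G hne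
          have hvv0 : v = v0 := by
            have hvr : v ∈ G.neighborFinset r ∩ Dset G := by
              rw [Finset.mem_inter, SimpleGraph.mem_neighborFinset]
              exact ⟨((SimpleGraph.mem_neighborFinset _ _ _).mp hrN).symm, hvD⟩
            rw [hv0eq, Finset.mem_singleton] at hvr
            exact hvr
          subst hvv0
          exact Finset.mem_erase.mpr ⟨hpr, hpN⟩
        rw [hsub_sum _ hT]
        have hcard : ((G.neighborFinset v0).erase r).card = 2 := by
          rw [Finset.card_erase_of_mem hrv0]
          have h5 : (G.neighborFinset v0).card = 3 := hv03
          omega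
        have hbb := hb2 ((G.neighborFinset v0).erase r)
        rw [hcard] at hbb
        rw [hdeg, hk]
        omega
      · -- kk r = 2
        obtain ⟨v, v', hvv', hveq2⟩ := Finset.card_eq_two.mp (hkdef.trans hk)
        have hvm : v ∈ G.neighborFinset r ∩ Dset G := by rw [hveq2]; simp
        have hv'm : v' ∈ G.neighborFinset r ∩ Dset G := by rw [hveq2]; simp
        rw [Finset.mem_inter] at hvm hv'm
        have hv3 : G.degree v = 3 := (mem_Dset G).mp hvm.2
        have hv'3 : G.degree v' = 3 := (mem_Dset G).mp hv'm.2
        have hvr : G.Adj v r := ((SimpleGraph.mem_neighborFinset _ _ _).mp hvm.1).symm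
        have hv'r : G.Adj v' r := ((SimpleGraph.mem_neighborFinset _ _ _).mp hv'm.1).symm
        obtain ⟨x1, x2, hx12, hrx1, hrx2, hNv, erx1, erx2, ex12⟩ :=
          deg3_nbhd_of_mem G h3 h2 hn hv3 hvr
        obtain ⟨y1, y2, hy12, hry1, hry2, hNv', ery1, ery2, ey12⟩ :=
          deg3_nbhd_of_mem G h3 h2 hn hv'3 hv'r
        by_cases hsame : G.neighborFinset v = G.neighborFinset v'
        · -- same class: chargers among {x1, x2}, at most one of them poor
          have hT : ∀ p, charge G p r ≠ 0 → p ∈ ({x1, x2} : Finset V) := by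
            intro p hne
            obtain ⟨hPp, _, hpr, w, hwD, hpw, hrw⟩ := charge_ne_zero G hne
            have hwm : w ∈ G.neighborFinset r ∩ Dset G := by
              rw [Finset.mem_inter, SimpleGraph.mem_neighborFinset]
              exact ⟨((SimpleGraph.mem_neighborFinset _ _ _).mp hrw).symm, hwD⟩
            rw [hveq2] at hwm
            simp only [Finset.mem_insert, Finset.mem_singleton] at hwm
            have hpv : p ∈ G.neighborFinset v := by
              rcases hwm with rfl | rfl
              · exact hpw
              · rw [hsame]; exact hpw
            rw [hNv] at hpv
            simp only [Finset.mem_insert, Finset.mem_singleton] at hpv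
            rcases hpv with rfl | rfl | rfl
            · exact absurd rfl hpr
            · simp
            · simp
          rw [hsub_sum _ hT, Finset.sum_pair hx12]
          have hx1m : x1 ∈ G.neighborFinset v := by rw [hNv]; simp
          have hx2m : x2 ∈ G.neighborFinset v := by rw [hNv]; simp
          have hnot2 : ¬ (Poor G x1 ∧ Poor G x2) := by
            rintro ⟨hp1, hp2⟩
            exact L2 G h3 h2 hn hv3 hv'3 hvv' hsame hx12 hx1m hx2m hp1.1 hp2.1
          rw [hdeg, hk]
          by_cases hP1 : Poor G x1
          · have h0 : charge G x2 r = 0 :=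
              charge_eq_zero_of_not_poor G (fun h => hnot2 ⟨hP1, h⟩) r
            have hle := charge_le_two G x1 r
            omega
          · have h0 : charge G x1 r = 0 := charge_eq_zero_of_not_poor G hP1 r
            have hle := charge_le_two G x2 r
            omega
        · -- different classes: the two triangles share a vertex
          have hmemNrD : ∀ w u, w ∈ Dset G → r ∈ G.neighborFinset w → G.degree w = 3 →
              u ∈ (G.neighborFinset w).erase r → u ∈ G.neighborFinset r \ Dset G := by
            intro w u hwD hrw hw3 hu
            rw [Finset.mem_erase] at hu
            have hadj : G.Adj u r := nbhd_clique G h3 h2 hn hw3 hu.2 hrw hu.1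
            rw [Finset.mem_sdiff, SimpleGraph.mem_neighborFinset]
            exact ⟨hadj.symm, triangle_not_D G h3 h2 hn hwD hu.2⟩
          have hrv : r ∈ G.neighborFinset v := by
            rw [SimpleGraph.mem_neighborFinset]; exact hvr
          have hrv' : r ∈ G.neighborFinset v' := by
            rw [SimpleGraph.mem_neighborFinset]; exact hv'r
          have hsd : (G.neighborFinset r \ Dset G).card = 3 := by
            have := Finset.card_sdiff_add_card_inter (G.neighborFinset r) (Dset G)
            rw [hkdef, hdegdef] at this
            omega
          have hx1mem : x1 ∈ G.neighborFinset r \ Dset G := by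
            apply hmemNrD v x1 hvm.2 hrv hv3
            rw [Finset.mem_erase, hNv]
            exact ⟨Ne.symm hrx1, by simp⟩
          have hx2mem : x2 ∈ G.neighborFinset r \ Dset G := by
            apply hmemNrD v x2 hvm.2 hrv hv3
            rw [Finset.mem_erase, hNv]
            exact ⟨Ne.symm hrx2, by simp⟩
          have hy1mem : y1 ∈ G.neighborFinset r \ Dset G := by
            apply hmemNrD v' y1 hv'm.2 hrv' hv'3
            rw [Finset.mem_erase, hNv']
            exact ⟨Ne.symm hry1, by simp⟩
          have hy2mem : y2 ∈ G.neighborFinset r \ Dset G := by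
            apply hmemNrD v' y2 hv'm.2 hrv' hv'3
            rw [Finset.mem_erase, hNv']
            exact ⟨Ne.symm hry2, by simp⟩
          have hcase : x1 = y1 ∨ x1 = y2 ∨ x2 = y1 ∨ x2 = y2 := by
            by_contra hco
            push_neg at hco
            obtain ⟨c1, c2, c3, c4⟩ := hco
            have hsubn : ({x1, x2, y1, y2} : Finset V) ⊆ G.neighborFinset r \ Dset G := by
              intro u hu
              simp only [Finset.mem_insert, Finset.mem_singleton] at hu
              rcases hu with rfl | rfl | rfl | rfl
              · exact hx1mem
              · exact hx2mem
              · exact hy1mem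
              · exact hy2mem
            have hc4 : ({x1, x2, y1, y2} : Finset V).card = 4 := by
              rw [Finset.card_insert_of_notMem (by simp [hx12, c1, c2]),
                Finset.card_insert_of_notMem (by simp [c3, c4]),
                Finset.card_insert_of_notMem (by simp [hy12]), Finset.card_singleton]
            have := Finset.card_le_card hsubn
            rw [hc4, hsd] at this
            omega
          -- helper: a private triangle partner sends at most 1
          have hone : ∀ w w' sh pp : V, G.neighborFinset r ∩ Dset G = {w, w'} →
              w ≠ w' → ¬ (G.neighborFinset w = G.neighborFinset w') →
              G.neighborFinset w = {r, sh, pp} → (¬ Poor G sh) → r ≠ pp →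
              charge G pp r ≤ 1 := by
            intro w w' sh pp hinter hww' hnsame hNw hshP hrpp
            by_cases hPp : Poor G pp
            · have hwm2 : w ∈ G.neighborFinset r ∩ Dset G := by rw [hinter]; simp
              have hw'm2 : w' ∈ G.neighborFinset r ∩ Dset G := by rw [hinter]; simp
              rw [Finset.mem_inter] at hwm2 hw'm2
              have hw3 : G.degree w = 3 := (mem_Dset G).mp hwm2.2
              have hppNw : pp ∈ G.neighborFinset w := by rw [hNw]; simp
              have hAdjwpp : G.Adj w pp := (SimpleGraph.mem_neighborFinset _ _ _).mp hppNw
              have hwinN : w ∈ G.neighborFinset pp ∩ Dset G := by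
                rw [Finset.mem_inter, SimpleGraph.mem_neighborFinset]
                exact ⟨hAdjwpp.symm, hwm2.2⟩
              have huniq : ∀ u, u ∈ G.neighborFinset pp ∩ Dset G → u = w := by
                intro u hu
                by_contra hune
                rw [Finset.mem_inter] at hu
                have hu3 : G.degree u = 3 := (mem_Dset G).mp hu.2
                have hupp : G.Adj u pp := ((SimpleGraph.mem_neighborFinset _ _ _).mp hu.1).symm
                have heqN := same_nbhd G h3 h2 hn hPp.1 hu3 hw3 hune hupp hAdjwpp
                have hru : r ∈ G.neighborFinset u := by rw [heqN, hNw]; simp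
                have hum : u ∈ G.neighborFinset r ∩ Dset G := by
                  rw [Finset.mem_inter, SimpleGraph.mem_neighborFinset]
                  exact ⟨((SimpleGraph.mem_neighborFinset _ _ _).mp hru).symm, hu.2⟩
                rw [hinter] at hum
                simp only [Finset.mem_insert, Finset.mem_singleton] at hum
                rcases hum with rfl | rfl
                · exact hune rfl
                · exact hnsame heqN.symm
              have hkpp : kk G pp = 1 := by
                have : G.neighborFinset pp ∩ Dset G = {w} :=
                  Finset.eq_singleton_iff_unique_mem.mpr ⟨hwinN, huniq⟩
                unfold kk
                rw [this, Finset.card_singleton]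
              have hnotbad : ¬ BadMate G pp r := by
                rintro ⟨w0, hw0D, hppw0, t, htw0, htpp, htr, hPt⟩
                have hw0 : w0 = w := by
                  apply huniq
                  rw [Finset.mem_inter, SimpleGraph.mem_neighborFinset]
                  exact ⟨((SimpleGraph.mem_neighborFinset _ _ _).mp hppw0).symm, hw0D⟩
                subst hw0
                rw [hNw] at htw0
                simp only [Finset.mem_insert, Finset.mem_singleton] at htw0
                rcases htw0 with rfl | rfl | rfl
                · exact htr rfl
                · exact hshP hPt
                · exact htpp rfl
              unfold charge
              by_cases hc : Poor G pp ∧ Rich G r ∧ MateP G pp r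
              · rw [if_pos hc, if_neg (show ¬ kk G pp = 2 by omega), if_neg hnotbad]
              · rw [if_neg hc]
                norm_num
            · rw [charge_eq_zero_of_not_poor G hPp r]
              norm_num
          -- main helper concluding the goal given the shared vertex
          have key : ∀ sh pr pr' : V, G.neighborFinset v = {r, sh, pr} →
              G.neighborFinset v' = {r, sh, pr'} → r ≠ pr → r ≠ pr' →
              ∑ p ∈ Finset.univ, charge G p r ≤
                6 * (G.degree r : ℤ) - 24 - 2 * (kk G r : ℤ) := by
            intro sh pr pr' hNvK hNv'K hrpr hrpr'
            have hshNv : sh ∈ G.neighborFinset v := by rw [hNvK]; simp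
            have hshNv' : sh ∈ G.neighborFinset v' := by rw [hNv'K]; simp
            have hAdjvsh : G.Adj v sh := (SimpleGraph.mem_neighborFinset _ _ _).mp hshNv
            have hAdjv'sh : G.Adj v' sh := (SimpleGraph.mem_neighborFinset _ _ _).mp hshNv'
            have hshP : ¬ Poor G sh := by
              intro h
              exact hsame (same_nbhd G h3 h2 hn h.1 hv3 hv'3 hvv' hAdjvsh hAdjv'sh)
            have hprpr' : pr ≠ pr' := by
              intro h
              apply hsame
              rw [hNvK, hNv'K, h]
            have hone1 := hone v v' sh pr hveq2 hvv' hsame hNvK hshP hrpr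
            have hone2 := hone v' v sh pr' (by rw [hveq2]; exact Finset.pair_comm v v')
              (Ne.symm hvv') (fun h => hsame h.symm) hNv'K hshP hrpr'
            have hT : ∀ p, charge G p r ≠ 0 → p ∈ ({pr, pr'} : Finset V) := by
              intro p hne
              obtain ⟨hPp, _, hpr0, w, hwD, hpw, hrw⟩ := charge_ne_zero G hne
              have hwm : w ∈ G.neighborFinset r ∩ Dset G := by
                rw [Finset.mem_inter, SimpleGraph.mem_neighborFinset]
                exact ⟨((SimpleGraph.mem_neighborFinset _ _ _).mp hrw).symm, hwD⟩
              rw [hveq2] at hwm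
              simp only [Finset.mem_insert, Finset.mem_singleton] at hwm
              rcases hwm with rfl | rfl
              · rw [hNvK] at hpw
                simp only [Finset.mem_insert, Finset.mem_singleton] at hpw
                rcases hpw with rfl | rfl | rfl
                · exact absurd rfl hpr0
                · exact absurd hPp hshP
                · simp
              · rw [hNv'K] at hpw
                simp only [Finset.mem_insert, Finset.mem_singleton] at hpw
                rcases hpw with rfl | rfl | rfl
                · exact absurd rfl hpr0
                · exact absurd hPp hshP
                · simp
            rw [hsub_sum _ hT, Finset.sum_pair hprpr']
            rw [hdeg, hk]
            omega
          rcases hcase with he | he | he | he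
          · rw [← he] at hNv'
            exact key x1 x2 y2 hNv hNv' hrx2 hry2
          · have hNv'2 : G.neighborFinset v' = {r, x1, y1} := by
              rw [hNv', ← he]; ext u; simp; tauto
            exact key x1 x2 y1 hNv hNv'2 hrx2 hry1
          · have hNv2 : G.neighborFinset v = {r, x2, x1} := by
              rw [hNv]; ext u; simp; tauto
            rw [← he] at hNv'
            exact key x2 x1 y2 hNv2 hNv' hrx1 hry2
          · have hNv2 : G.neighborFinset v = {r, x2, x1} := by
              rw [hNv]; ext u; simp; tauto
            have hNv'2 : G.neighborFinset v' = {r, x2, y1} := by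
              rw [hNv', ← he]; ext u; simp; tauto
            exact key x2 x1 y1 hNv2 hNv'2 hrx1 hry1
      · -- kk r = 3 : no chargers at all
        obtain ⟨v1, v2, v3, h12, h13, h23, hveq3⟩ :=
          Finset.card_eq_three.mp (hkdef.trans hk)
        have hsd : (G.neighborFinset r \ Dset G).card = 2 := by
          have := Finset.card_sdiff_add_card_inter (G.neighborFinset r) (Dset G)
          rw [hkdef, hdegdef] at this
          omega
        have hvfacts : ∀ w, w ∈ ({v1, v2, v3} : Finset V) →
            w ∈ Dset G ∧ r ∈ G.neighborFinset w ∧ G.degree w = 3 := by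
          intro w hw
          have hwm : w ∈ G.neighborFinset r ∩ Dset G := by rw [hveq3]; exact hw
          rw [Finset.mem_inter] at hwm
          exact ⟨hwm.2, by
            rw [SimpleGraph.mem_neighborFinset]
            exact ((SimpleGraph.mem_neighborFinset _ _ _).mp hwm.1).symm,
            (mem_Dset G).mp hwm.2⟩
        have herase : ∀ w, w ∈ ({v1, v2, v3} : Finset V) →
            (G.neighborFinset w).erase r = G.neighborFinset r \ Dset G := by
          intro w hw
          obtain ⟨hwD, hrw, hw3⟩ := hvfacts w hw
          have hsub : (G.neighborFinset w).erase r ⊆ G.neighborFinset r \ Dset G := by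
            intro u hu
            rw [Finset.mem_erase] at hu
            have hadj : G.Adj u r := nbhd_clique G h3 h2 hn hw3 hu.2 hrw hu.1
            rw [Finset.mem_sdiff, SimpleGraph.mem_neighborFinset]
            exact ⟨hadj.symm, triangle_not_D G h3 h2 hn hwD hu.2⟩
          apply Finset.eq_of_subset_of_card_le hsub
          rw [hsd, Finset.card_erase_of_mem hrw]
          have : (G.neighborFinset w).card = 3 := hw3
          omega
        rw [hsub_sum ∅ ?_]
        · simp
          rw [hdeg, hk]
          norm_num
        · intro p hne
          exfalso
          obtain ⟨hPp, _, _⟩ := charge_ne_zero G hne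
          have hpmem := hchadj p hne
          have hsubv : ({v1, v2, v3} : Finset V) ⊆ G.neighborFinset p ∩ Dset G := by
            intro w hw
            have : p ∈ (G.neighborFinset w).erase r := by
              rw [herase w hw]; exact hpmem
            rw [Finset.mem_erase] at this
            rw [Finset.mem_inter, SimpleGraph.mem_neighborFinset]
            exact ⟨((SimpleGraph.mem_neighborFinset _ _ _).mp this.2).symm,
              (hvfacts w hw).1⟩
          have hc3 : ({v1, v2, v3} : Finset V).card = 3 := by
            rw [Finset.card_insert_of_notMem (by simp [h12, h13]),
              Finset.card_insert_of_notMem (by simp [h23]), Finset.card_singleton]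
          have hge := Finset.card_le_card hsubv
          rw [hc3] at hge
          have hkp : 3 ≤ kk G p := hge
          rcases poor_kk G h3 h2 hn hPp with h | h <;> omega



lemma kk_sum_eq : ∑ a ∈ Finset.univ, kk G a = ∑ v ∈ Dset G, G.degree v := by
  have h1 : ∀ a, kk G a = ∑ v ∈ Dset G, if G.Adj a v then 1 else 0 := by
    intro a
    unfold kk
    rw [Finset.inter_comm, ← Finset.filter_mem_eq_inter, Finset.card_filter]
    apply Finset.sum_congr rfl
    intro v _
    congr 1
    simp [SimpleGraph.mem_neighborFinset]
  have h2 : ∀ v, (∑ a ∈ Finset.univ, if G.Adj a v then 1 else 0) = G.degree v := by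
    intro v
    rw [← Finset.card_filter]
    congr 1
    ext a
    simp [SimpleGraph.mem_neighborFinset, SimpleGraph.adj_comm]
  calc ∑ a ∈ Finset.univ, kk G a
      = ∑ a ∈ Finset.univ, ∑ v ∈ Dset G, if G.Adj a v then 1 else 0 := by
        apply Finset.sum_congr rfl; intro a _; exact h1 a
    _ = ∑ v ∈ Dset G, ∑ a ∈ Finset.univ, if G.Adj a v then 1 else 0 :=
        Finset.sum_comm
    _ = ∑ v ∈ Dset G, G.degree v := by
        apply Finset.sum_congr rfl; intro v _; exact h2 v

lemma kk_D_zero (h3 : G.KConnected 3) (h2 : G.KCyclic 2) (hn : 6 ≤ Fintype.card V)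
    {v : V} (hv : v ∈ Dset G) : kk G v = 0 := by
  unfold kk
  rw [Finset.card_eq_zero]
  rw [Finset.eq_empty_iff_forall_notMem]
  intro u hu
  rw [Finset.mem_inter, SimpleGraph.mem_neighborFinset, mem_Dset] at hu
  rw [mem_Dset] at hv
  exact indep G h3 h2 hn hv hu.2 hu.1

lemma main_count (h3 : G.KConnected 3) (h2 : G.KCyclic 2) (hn : 6 ≤ Fintype.card V) :
    2 * Fintype.card V ≤ G.edgeFinset.card := by
  classical
  set D := Dset G with hD
  set Dc := Finset.univ \ D with hDc
  -- pointwise ledger inequality off D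
  have pointwise : ∀ a ∈ Dc,
      (∑ p ∈ Finset.univ, charge G p a) - (∑ r ∈ Finset.univ, charge G a r) ≤
        6 * (G.degree a : ℤ) - 24 - 2 * (kk G a : ℤ) := by
    intro a ha
    rw [hDc, Finset.mem_sdiff] at ha
    have haD : G.degree a ≠ 3 := by
      intro h
      exact ha.2 ((mem_Dset G).mpr h)
    have hd3 := mindeg3 G h3 hn a
    by_cases hR : Rich G a
    · have hsent : ∑ r ∈ Finset.univ, charge G a r = 0 := by
        apply Finset.sum_eq_zero
        intro r _
        apply charge_eq_zero_of_not_poor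
        intro hP
        have := hR
        unfold Rich at this
        rw [hP.1] at this
        omega
      rw [hsent]
      have := received_le G h3 h2 hn hR
      omega
    · have hdeg4 : G.degree a = 4 := by
        unfold Rich at hR
        omega
      have hrecv : ∑ p ∈ Finset.univ, charge G p a = 0 := by
        apply Finset.sum_eq_zero
        intro p _
        exact charge_eq_zero_of_not_rich G hR p
      rw [hrecv]
      by_cases hk : 1 ≤ kk G a
      · have hsent := sent_ge G h3 h2 hn ⟨hdeg4, hk⟩
        rw [hdeg4]
        push_cast
        omega
      · have h0 : kk G a = 0 := by omega
        have hsent : (0 : ℤ) ≤ ∑ r ∈ Finset.univ, charge G a r :=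
          Finset.sum_nonneg (fun r _ => charge_nonneg G a r)
        rw [hdeg4, h0]
        push_cast
        omega
  -- the total flow is zero
  have flow : ∑ a ∈ Dc, ((∑ p ∈ Finset.univ, charge G p a) -
      (∑ r ∈ Finset.univ, charge G a r)) = 0 := by
    have hDzero : ∀ v ∈ D, (∑ p ∈ Finset.univ, charge G p v) -
        (∑ r ∈ Finset.univ, charge G v r) = 0 := by
      intro v hv
      have hv3 : G.degree v = 3 := (mem_Dset G).mp hv
      have e1 : ∑ p ∈ Finset.univ, charge G p v = 0 := by
        apply Finset.sum_eq_zero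
        intro p _
        apply charge_eq_zero_of_not_rich
        unfold Rich
        omega
      have e2 : ∑ r ∈ Finset.univ, charge G v r = 0 := by
        apply Finset.sum_eq_zero
        intro r _
        apply charge_eq_zero_of_not_poor
        intro hP
        rw [hP.1] at hv3
        omega
      rw [e1, e2]
      ring
    have htot : ∑ a ∈ Finset.univ, ((∑ p ∈ Finset.univ, charge G p a) -
        (∑ r ∈ Finset.univ, charge G a r)) = 0 := by
      rw [Finset.sum_sub_distrib]
      rw [Finset.sum_comm]
      ring
    have hsplit : ∑ a ∈ Finset.univ \ D, ((∑ p ∈ Finset.univ, charge G p a) -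
        (∑ r ∈ Finset.univ, charge G a r)) + ∑ a ∈ D, ((∑ p ∈ Finset.univ, charge G p a) -
        (∑ r ∈ Finset.univ, charge G a r)) = ∑ a ∈ Finset.univ,
        ((∑ p ∈ Finset.univ, charge G p a) - (∑ r ∈ Finset.univ, charge G a r)) :=
      Finset.sum_sdiff (Finset.subset_univ D)
    rw [htot, Finset.sum_eq_zero hDzero] at hsplit
    rw [hDc]
    omega
  -- summing the pointwise inequality
  have hmain : 0 ≤ ∑ a ∈ Dc, (6 * (G.degree a : ℤ) - 24 - 2 * (kk G a : ℤ)) := by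
    rw [← flow]
    exact Finset.sum_le_sum pointwise
  -- expand sums
  have hsum_kk_D : ∑ a ∈ D, kk G a = 0 :=
    Finset.sum_eq_zero (fun v hv => kk_D_zero G h3 h2 hn hv)
  have hsum_kk : ∑ a ∈ Dc, kk G a = 3 * D.card := by
    have hsplit : ∑ a ∈ Finset.univ \ D, kk G a + ∑ a ∈ D, kk G a =
        ∑ a ∈ Finset.univ, kk G a :=
      Finset.sum_sdiff (Finset.subset_univ D)
    rw [hsum_kk_D] at hsplit
    have hdeg_D : ∑ v ∈ D, G.degree v = 3 * D.card := by
      rw [Finset.sum_congr rfl (fun v hv => (mem_Dset G).mp hv)]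
      rw [Finset.sum_const, smul_eq_mul]
      ring
    have := kk_sum_eq G
    rw [hdeg_D] at this
    rw [hDc]
    omega
  have hcardDc : Dc.card = Fintype.card V - D.card := by
    rw [hDc, Finset.card_sdiff_of_subset (Finset.subset_univ D), Finset.card_univ]
  have hDle : D.card ≤ Fintype.card V := by
    rw [← Finset.card_univ]
    exact Finset.card_le_card (Finset.subset_univ D)
  have hexp : ∑ a ∈ Dc, (6 * (G.degree a : ℤ) - 24 - 2 * (kk G a : ℤ)) =
      6 * (∑ a ∈ Dc, (G.degree a : ℤ)) - 24 * Dc.card - 2 * (3 * D.card : ℤ) := by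
    rw [Finset.sum_sub_distrib, Finset.sum_sub_distrib, ← Finset.mul_sum,
      Finset.sum_const, ← Finset.mul_sum]
    have : (∑ a ∈ Dc, (kk G a : ℤ)) = ((3 * D.card : ℕ) : ℤ) := by
      rw [← hsum_kk]
      push_cast
      rfl
    rw [this]
    push_cast
    ring
  -- total degree sum
  have hdegsplit : ∑ a ∈ Finset.univ \ D, (G.degree a : ℤ) + ∑ a ∈ D, (G.degree a : ℤ) =
      ∑ a ∈ Finset.univ, (G.degree a : ℤ) :=
    Finset.sum_sdiff (Finset.subset_univ D)
  have hdeg_D : ∑ v ∈ D, (G.degree v : ℤ) = 3 * D.card := by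
    have : ∀ v ∈ D, (G.degree v : ℤ) = 3 := by
      intro v hv
      rw [(mem_Dset G).mp hv]
      norm_num
    rw [Finset.sum_congr rfl this, Finset.sum_const, nsmul_eq_mul]
    ring
  have htwice : ∑ v ∈ Finset.univ, G.degree v = 2 * G.edgeFinset.card :=
    SimpleGraph.sum_degrees_eq_twice_card_edges G
  -- put it together
  have hS : 4 * (Fintype.card V : ℤ) ≤ ∑ v ∈ Finset.univ, (G.degree v : ℤ) := by
    rw [hexp] at hmain
    rw [← hdegsplit, hdeg_D, ← hDc]
    rw [hcardDc] at hmain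
    have : ((Fintype.card V - D.card : ℕ) : ℤ) = (Fintype.card V : ℤ) - D.card := by
      push_cast [Nat.cast_sub hDle]
      ring
    rw [this] at hmain
    linarith
  have hcast : (∑ v ∈ Finset.univ, (G.degree v : ℤ)) = ((2 * G.edgeFinset.card : ℕ) : ℤ) := by
    rw [← htwice]
    push_cast
    rfl
  rw [hcast] at hS
  have := hS
  push_cast at this
  omega


end Aux

/-- A 3-connected 2-cyclic graph on `n ≥ 6` vertices has at least `2n` edges. -/
theorem stmt_2 {V : Type*} [Fintype V] (G : SimpleGraph V)
    (h3 : G.KConnected 3) (h2 : G.KCyclic 2) (hn : 6 ≤ Fintype.card V) :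
    2 * Fintype.card V ≤ G.edgeSet.ncard := by
  classical
  have h := main_count G h3 h2 hn
  rw [Set.ncard_eq_toFinset_card']
  exact h
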